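/- Let p be a prime and d ≥ 1. Define w_n = (1/n) Σ_{m | n} μ(m)·d^{n/m} (the necklace-counting numbers). Then the formal power series identity ∏_{n=1}^∞ (1/(1−t^n))^{w_n} = 1/(1−dt) holds in ℤ[[t]] (equivalently ℚ[[t]]). -/

import Mathlib

open Finset ArithmeticFunction PowerSeries

private lemma necklace_geomInv (n : ℕ) (hn : 1 ≤ n) :
    ((1 - (X : ℚ⟦X⟧) ^ n)⁻¹) = PowerSeries.mk (fun j => if n ∣ j then (1:ℚ) else 0) := by
  have hc : constantCoeff (R := ℚ) (1 - (X : ℚ⟦X⟧) ^ n) ≠ 0 := by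
    simp [zero_pow (by omega : n ≠ 0)]
  rw [eq_comm, PowerSeries.eq_inv_iff_mul_eq_one hc]
  ext k
  rw [mul_sub, mul_one, map_sub, PowerSeries.coeff_mul_X_pow', PowerSeries.coeff_mk]
  rcases eq_or_ne k 0 with rfl | hk
  · rw [if_pos (dvd_zero n), if_neg (by omega : ¬ n ≤ 0)]; simp
  · rw [PowerSeries.coeff_one, if_neg hk]
    by_cases h : n ≤ k
    · rw [if_pos h, PowerSeries.coeff_mk]
      have hiff : n ∣ k ↔ n ∣ k - n := by
        constructor
        · intro h'; exact Nat.dvd_sub h' dvd_rfl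
        · intro h'; have := Nat.dvd_add h' (dvd_refl n); rwa [Nat.sub_add_cancel h] at this
      by_cases hdk : n ∣ k
      · rw [if_pos hdk, if_pos (hiff.mp hdk)]; ring
      · rw [if_neg hdk, if_neg (fun hh => hdk (hiff.mpr hh))]; ring
    · rw [if_neg h, if_neg (fun hdk => h (Nat.le_of_dvd (by omega) hdk))]; ring

private lemma necklace_geomInvD (d : ℕ) :
    ((1 - PowerSeries.C (R := ℚ) (d : ℚ) * X)⁻¹) = PowerSeries.mk (fun j => (d:ℚ) ^ j) := by
  have hc : constantCoeff (R := ℚ) (1 - PowerSeries.C (R := ℚ) (d : ℚ) * X) ≠ 0 := by simp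
  rw [eq_comm, PowerSeries.eq_inv_iff_mul_eq_one hc]
  ext k
  rw [mul_sub, mul_one, map_sub]
  have : (PowerSeries.mk (fun j => (d:ℚ) ^ j)) * (PowerSeries.C (R := ℚ) (d : ℚ) * X)
      = (PowerSeries.mk (fun j => (d:ℚ) ^ j) * PowerSeries.C (R := ℚ) (d : ℚ)) * X := by ring
  rw [this]
  rcases eq_or_ne k 0 with rfl | hk
  · simp
  · obtain ⟨m, rfl⟩ := Nat.exists_eq_succ_of_ne_zero hk
    rw [PowerSeries.coeff_succ_mul_X, PowerSeries.coeff_mk, PowerSeries.coeff_one,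
      if_neg hk, PowerSeries.coeff_mul_C, PowerSeries.coeff_mk]
    rw [pow_succ]; ring

private lemma necklace_derivPow (g : ℚ⟦X⟧) (hg : constantCoeff (R := ℚ) g ≠ 0) (m : ℕ) :
    d⁄dX ℚ (g ^ m) = g ^ m * ((m : ℚ⟦X⟧) * d⁄dX ℚ g * g⁻¹) := by
  cases m with
  | zero => simp
  | succ k =>
    rw [Derivation.leibniz_pow]
    have h1 : g ^ (k+1) * g⁻¹ = g ^ k := by
      rw [pow_succ, mul_assoc, PowerSeries.mul_inv_cancel g hg, mul_one]
    calc (k+1) • g ^ (k + 1 - 1) • d⁄dX ℚ g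
        = ((k+1 : ℕ) : ℚ⟦X⟧) * g ^ k * d⁄dX ℚ g := by
          simp [smul_smul, smul_eq_mul]; ring
      _ = g ^ (k+1) * g⁻¹ * (((k+1 : ℕ) : ℚ⟦X⟧) * d⁄dX ℚ g) := by rw [h1]; ring
      _ = g ^ (k+1) * (((k+1:ℕ) : ℚ⟦X⟧) * d⁄dX ℚ g * g⁻¹) := by ring

private lemma necklace_derivProd (s : Finset ℕ) (g : ℕ → ℚ⟦X⟧) (W : ℕ → ℕ)
    (hg : ∀ n ∈ s, constantCoeff (R := ℚ) (g n) ≠ 0) :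
    d⁄dX ℚ (∏ n ∈ s, g n ^ W n) =
      (∏ n ∈ s, g n ^ W n) * ∑ n ∈ s, (W n : ℚ⟦X⟧) * d⁄dX ℚ (g n) * (g n)⁻¹ := by
  induction s using Finset.induction_on with
  | empty => simp
  | insert _ _ ha ih =>
    rename_i a s'
    rw [Finset.prod_insert ha, Finset.sum_insert ha, Derivation.leibniz,
      ih (fun n hn => hg n (Finset.mem_insert_of_mem hn)),
      necklace_derivPow (g a) (hg a (Finset.mem_insert_self a s')) (W a)]
    simp only [smul_eq_mul]
    ring

private lemma necklace_keySum (d : ℕ) (w : ℕ → ℚ)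
    (hw : ∀ n : ℕ, 1 ≤ n →
      w n = (1 / (n : ℚ)) * ∑ m ∈ n.divisors, (moebius m : ℚ) * (d : ℚ) ^ (n / m))
    (k : ℕ) (hk : 1 ≤ k) :
    ∑ n ∈ k.divisors, (n : ℚ) * w n = (d : ℚ) ^ k := by
  have := (sum_eq_iff_sum_mul_moebius_eq (R := ℚ)
    (f := fun n => (n : ℚ) * w n) (g := fun n => (d : ℚ) ^ n)).mpr ?_ k hk
  · exact this
  · intro n hn
    have hn0 : (n : ℚ) ≠ 0 := Nat.cast_ne_zero.mpr (by omega)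
    rw [hw n hn]
    rw [Nat.sum_divisorsAntidiagonal (f := fun a b => ((moebius a : ℚ)) * (d : ℚ) ^ b)]
    field_simp

private lemma necklace_termCoeff (n : ℕ) (hn : 1 ≤ n) (j : ℕ) :
    coeff (R := ℚ) j (d⁄dX ℚ ((1 - (X : ℚ⟦X⟧) ^ n)⁻¹) * ((1 - (X : ℚ⟦X⟧) ^ n)⁻¹)⁻¹) =
      if n ∣ (j + 1) then (n : ℚ) else 0 := by
  have hc : constantCoeff (R := ℚ) (1 - (X : ℚ⟦X⟧) ^ n) ≠ 0 := by
    simp [zero_pow (by omega : n ≠ 0)]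
  set f : ℚ⟦X⟧ := 1 - (X : ℚ⟦X⟧) ^ n with hf
  have hinv : f⁻¹ * f = 1 := by
    rw [mul_comm]; exact PowerSeries.mul_inv_cancel f hc
  have hc' : constantCoeff (R := ℚ) f⁻¹ ≠ 0 := by
    rw [PowerSeries.constantCoeff_inv]; exact inv_ne_zero hc
  have h2 : (f⁻¹)⁻¹ = f := (PowerSeries.inv_eq_iff_mul_eq_one hc').mpr (PowerSeries.mul_inv_cancel f hc)
  have h3 : d⁄dX ℚ f⁻¹ * (f⁻¹)⁻¹ = f⁻¹ * (n • (X : ℚ⟦X⟧) ^ (n-1)) := by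
    rw [h2, PowerSeries.derivative_inv']
    have hdf : d⁄dX ℚ f = -(n • (X : ℚ⟦X⟧) ^ (n-1)) := by
      rw [hf, map_sub, Derivation.leibniz_pow]
      simp
    rw [hdf]
    calc -f⁻¹ ^ 2 * -(n • (X : ℚ⟦X⟧) ^ (n-1)) * f
        = (f⁻¹ * f) * (f⁻¹ * (n • (X : ℚ⟦X⟧) ^ (n-1))) := by ring
      _ = f⁻¹ * (n • (X : ℚ⟦X⟧) ^ (n-1)) := by rw [hinv, one_mul]
  rw [h3, necklace_geomInv n hn]
  have : (PowerSeries.mk (fun j => if n ∣ j then (1:ℚ) else 0)) * (n • (X : ℚ⟦X⟧) ^ (n-1))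
      = (n : ℚ) • ((X : ℚ⟦X⟧) ^ (n-1) * PowerSeries.mk (fun j => if n ∣ j then (1:ℚ) else 0)) := by
    rw [PowerSeries.smul_eq_C_mul, map_natCast]
    simp [smul_eq_mul]; ring
  rw [this, map_smul, smul_eq_mul, PowerSeries.coeff_X_pow_mul', PowerSeries.coeff_mk]
  by_cases h : n - 1 ≤ j
  · rw [if_pos h]
    have hiff : n ∣ (j - (n-1)) ↔ n ∣ (j+1) := by
      constructor
      · intro h'
        have : j + 1 = (j - (n-1)) + n := by omega
        rw [this]; exact Nat.dvd_add h' dvd_rfl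
      · intro h'
        have : j - (n - 1) = (j + 1) - n := by omega
        rw [this]; exact Nat.dvd_sub h' dvd_rfl
    by_cases hd : n ∣ j + 1
    · rw [if_pos (hiff.mpr hd), if_pos hd]
      · simp [smul_eq_mul]
    · rw [if_neg (fun hh => hd (hiff.mp hh)), if_neg hd]; simp
  · rw [if_neg h, if_neg (fun hd => h (by
      have := Nat.le_of_dvd (by omega) hd; omega))]
    simp

/-- Let `d ≥ 1` and let `w_n = (1/n) ∑_{m ∣ n} μ(m)·d^{n/m}` be the necklace-counting numbers
(which are nonnegative integers, witnessed by `W`).  Then the formal power series identity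
`∏_{n=1}^∞ (1/(1−t^n))^{w_n} = 1/(1−dt)` holds, formalized coefficientwise: for every `N` the
coefficients up to degree `N` of the finite product `∏_{n=1}^N (1/(1−t^n))^{w_n}` agree with
those of `1/(1−dt)`. -/
theorem necklace_cyclotomic_identity
    (p d : ℕ) (hp : p.Prime) (hd : 1 ≤ d)
    (w : ℕ → ℚ)
    (hw : ∀ n : ℕ, 1 ≤ n →
      w n = (1 / (n : ℚ)) * ∑ m ∈ n.divisors, (moebius m : ℚ) * (d : ℚ) ^ (n / m))
    (W : ℕ → ℕ) (hW : ∀ n : ℕ, 1 ≤ n → (W n : ℚ) = w n) :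
    ∀ N k : ℕ, k ≤ N →
      PowerSeries.coeff (R := ℚ) k
          (∏ n ∈ Finset.Icc 1 N, ((1 - (PowerSeries.X : ℚ⟦X⟧) ^ n)⁻¹) ^ (W n)) =
        PowerSeries.coeff (R := ℚ) k ((1 - PowerSeries.C (R := ℚ) (d : ℚ) * PowerSeries.X)⁻¹) := by
  intro N
  set F : ℚ⟦X⟧ := ∏ n ∈ Finset.Icc 1 N, ((1 - (PowerSeries.X : ℚ⟦X⟧) ^ n)⁻¹) ^ (W n) with hF
  set G : ℚ⟦X⟧ := (1 - PowerSeries.C (R := ℚ) (d : ℚ) * PowerSeries.X)⁻¹ with hG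
  set U : ℚ⟦X⟧ := ∑ n ∈ Finset.Icc 1 N,
      (W n : ℚ⟦X⟧) * d⁄dX ℚ ((1 - (X : ℚ⟦X⟧) ^ n)⁻¹) * ((1 - (X : ℚ⟦X⟧) ^ n)⁻¹)⁻¹ with hUdef
  have hconst : ∀ n ∈ Finset.Icc 1 N, constantCoeff (R := ℚ) ((1 - (X : ℚ⟦X⟧) ^ n)⁻¹) ≠ 0 := by
    intro n hn
    rw [Finset.mem_Icc] at hn
    rw [PowerSeries.constantCoeff_inv]
    have : constantCoeff (R := ℚ) (1 - (X : ℚ⟦X⟧) ^ n) = 1 := by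
      simp [zero_pow (by omega : n ≠ 0)]
    rw [this]; norm_num
  have hFU : d⁄dX ℚ F = F * U :=
    necklace_derivProd (Finset.Icc 1 N) (fun n => (1 - (X : ℚ⟦X⟧) ^ n)⁻¹) W hconst
  -- coefficients of U
  have hUcoeff : ∀ j : ℕ, j + 1 ≤ N → coeff (R := ℚ) j U = (d : ℚ) ^ (j + 1) := by
    intro j hj
    rw [hUdef, map_sum]
    have step : ∀ n ∈ Finset.Icc 1 N,
        coeff (R := ℚ) j ((W n : ℚ⟦X⟧) * d⁄dX ℚ ((1 - (X : ℚ⟦X⟧) ^ n)⁻¹) * ((1 - (X : ℚ⟦X⟧) ^ n)⁻¹)⁻¹)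
          = if n ∣ (j+1) then (n : ℚ) * (W n : ℚ) else 0 := by
      intro n hn
      rw [Finset.mem_Icc] at hn
      have : (W n : ℚ⟦X⟧) * d⁄dX ℚ ((1 - (X : ℚ⟦X⟧) ^ n)⁻¹) * ((1 - (X : ℚ⟦X⟧) ^ n)⁻¹)⁻¹
          = (W n : ℚ) • (d⁄dX ℚ ((1 - (X : ℚ⟦X⟧) ^ n)⁻¹) * ((1 - (X : ℚ⟦X⟧) ^ n)⁻¹)⁻¹) := by
        rw [PowerSeries.smul_eq_C_mul, map_natCast]; ring
      rw [this, map_smul, smul_eq_mul, necklace_termCoeff n hn.1 j]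
      by_cases hdv : n ∣ j + 1
      · rw [if_pos hdv, if_pos hdv]; ring
      · rw [if_neg hdv, if_neg hdv]; ring
    rw [Finset.sum_congr rfl step, Finset.sum_ite, Finset.sum_const_zero, add_zero]
    have hfil : Finset.filter (fun n => n ∣ (j+1)) (Finset.Icc 1 N) = (j+1).divisors := by
      ext n
      rw [Finset.mem_filter, Finset.mem_Icc, Nat.mem_divisors]
      constructor
      · rintro ⟨_, h2⟩; exact ⟨h2, by omega⟩
      · rintro ⟨h1, _⟩
        refine ⟨⟨Nat.pos_of_dvd_of_pos h1 (by omega), ?_⟩, h1⟩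
        exact le_trans (Nat.le_of_dvd (by omega) h1) hj
    rw [hfil]
    have : ∀ n ∈ (j+1).divisors, (n : ℚ) * (W n : ℚ) = (n : ℚ) * w n := by
      intro n hn
      rw [hW n (Nat.pos_of_mem_divisors hn)]
    rw [Finset.sum_congr rfl this, necklace_keySum d w hw (j+1) (by omega)]
  -- derivative of G
  set V : ℚ⟦X⟧ := PowerSeries.C (R := ℚ) (d : ℚ) * G with hVdef
  have hGV : d⁄dX ℚ G = G * V := by
    rw [hG, PowerSeries.derivative_inv']
    have : d⁄dX ℚ (1 - PowerSeries.C (R := ℚ) (d : ℚ) * PowerSeries.X) = -(PowerSeries.C (R := ℚ) (d : ℚ)) := by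
      rw [map_sub]
      simp [Derivation.leibniz, smul_eq_mul]
    rw [this, hVdef, hG]
    ring
  have hVcoeff : ∀ j : ℕ, coeff (R := ℚ) j V = (d : ℚ) ^ (j + 1) := by
    intro j
    rw [hVdef, PowerSeries.coeff_C_mul, hG, necklace_geomInvD, PowerSeries.coeff_mk, pow_succ]
    ring
  -- main induction
  intro k
  induction k using Nat.strong_induction_on with
  | _ k ih =>
    intro hk
    match k with
    | 0 =>
      rw [coeff_zero_eq_constantCoeff, hF, map_prod]
      have h1 : ∀ n ∈ Finset.Icc 1 N,
          constantCoeff (R := ℚ) (((1 - (X : ℚ⟦X⟧) ^ n)⁻¹) ^ (W n)) = 1 := by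
        intro n hn
        rw [Finset.mem_Icc] at hn
        rw [map_pow, PowerSeries.constantCoeff_inv]
        have : constantCoeff (R := ℚ) (1 - (X : ℚ⟦X⟧) ^ n) = 1 := by
          simp [zero_pow (by omega : n ≠ 0)]
        rw [this]; norm_num
      rw [Finset.prod_congr rfl h1, Finset.prod_const_one, hG, necklace_geomInvD]
      simp [PowerSeries.constantCoeff_mk]
    | Nat.succ m =>
      have hm : m + 1 ≤ N := hk
      have h1 : coeff (R := ℚ) (m+1) F * ((m:ℚ) + 1) = coeff (R := ℚ) m (F * U) := by
        rw [← hFU, PowerSeries.coeff_derivative]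
      have h2 : coeff (R := ℚ) (m+1) G * ((m:ℚ) + 1) = coeff (R := ℚ) m (G * V) := by
        rw [← hGV, PowerSeries.coeff_derivative]
      have h3 : coeff (R := ℚ) m (F * U) = coeff (R := ℚ) m (G * V) := by
        rw [PowerSeries.coeff_mul, PowerSeries.coeff_mul]
        apply Finset.sum_congr rfl
        intro x hx
        rw [Finset.HasAntidiagonal.mem_antidiagonal] at hx
        have hx1 : x.1 ≤ N := by omega
        have hx2 : x.2 + 1 ≤ N := by omega
        rw [ih x.1 (by omega) hx1, hUcoeff x.2 hx2, hVcoeff x.2]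
      have hne : ((m:ℚ) + 1) ≠ 0 := by positivity
      have := h1.trans (h3.trans h2.symm)
      exact mul_right_cancel₀ hne this
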